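/- Let V be a finite-dimensional complex vector space with dim V = n and let N : V → V be of hook type with parameters (n, b): N^b = 0, N^{b−1} ≠ 0, and dim(im N) = b − 1. Let i_1 < i_2 < ⋯ < i_{b−1} be integers with j ≤ i_j ≤ n − b + j for each 1 ≤ j ≤ b − 1 (these are exactly the possible top rows n, i_{b−1}, …, i_1 of a standard Young tableau of hook shape). Then there exists a complete flag F(0) ⊂ F(1) ⊂ ⋯ ⊂ F(n) in V that is fixed by N and satisfies im N^{b−j} ⊆ F(i_j) ⊆ ker N^j for every 1 ≤ j ≤ b − 1. -/

import Mathlib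

open Submodule Set

/-- Coefficient-extraction lemma for a Jordan chain of a nilpotent endomorphism:
if `x = ∑ c j • N^(b-1-j) v` and `N^(j₀) x = 0`, then `c j₀ = 0`. -/
lemma hook_coeff {V : Type*} [AddCommGroup V] [Module ℂ V] (N : V →ₗ[ℂ] V) {b : ℕ}
    (hNb : N ^ b = 0) {v : V} (hv : (N ^ (b - 1)) v ≠ 0) (c : Fin b → ℂ) (x : V)
    (hx : ∑ j : Fin b, c j • (N ^ (b - 1 - (j : ℕ))) v = x) :
    ∀ j₀ : Fin b, (N ^ (j₀ : ℕ)) x = 0 → c j₀ = 0 := by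
  have main : ∀ j₀ : Fin b, (N ^ (j₀ : ℕ)) x = 0 →
      (∀ j : Fin b, (j₀ : ℕ) < (j : ℕ) → c j = 0) → c j₀ = 0 := by
    intro j₀ hx0 hhigh
    have hsum : (N ^ (j₀ : ℕ)) (∑ j : Fin b, c j • (N ^ (b - 1 - (j : ℕ))) v)
        = ∑ j : Fin b, c j • (N ^ ((j₀ : ℕ) + (b - 1 - (j : ℕ)))) v := by
      rw [map_sum]
      refine Finset.sum_congr rfl fun j _ => ?_
      rw [map_smul, ← Module.End.mul_apply, ← pow_add]
    have hsingle : ∑ j : Fin b, c j • (N ^ ((j₀ : ℕ) + (b - 1 - (j : ℕ)))) v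
        = c j₀ • (N ^ (b - 1)) v := by
      rw [Finset.sum_eq_single j₀]
      · have h1 : (j₀ : ℕ) + (b - 1 - (j₀ : ℕ)) = b - 1 := by
          have := j₀.isLt; omega
        rw [h1]
      · intro j _ hne
        have hne' : (j : ℕ) ≠ (j₀ : ℕ) := fun h => hne (Fin.ext h)
        rcases hne'.lt_or_gt with hlt | hgt
        · have h2 : (j₀ : ℕ) + (b - 1 - (j : ℕ))
              = ((j₀ : ℕ) + (b - 1 - (j : ℕ)) - b) + b := by
            have := j.isLt; have := j₀.isLt; omega
          rw [h2, pow_add, hNb]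
          simp
        · rw [hhigh j hgt, zero_smul]
      · intro h; exact absurd (Finset.mem_univ _) h
    have hz : c j₀ • (N ^ (b - 1)) v = 0 := by
      rw [← hsingle, ← hsum, hx, hx0]
    exact (smul_eq_zero.mp hz).resolve_right hv
  have key : ∀ d : ℕ, ∀ j₀ : Fin b, b - 1 - (j₀ : ℕ) ≤ d → (N ^ (j₀ : ℕ)) x = 0 → c j₀ = 0 := by
    intro d
    induction d with
    | zero =>
      intro j₀ hd hx0
      refine main j₀ hx0 fun j hj => ?_
      exact absurd j.isLt (by omega)
    | succ d ih =>
      intro j₀ hd hx0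
      refine main j₀ hx0 fun j hj => ih j (by omega) ?_
      have h3 : (j : ℕ) = ((j : ℕ) - (j₀ : ℕ)) + (j₀ : ℕ) := by omega
      rw [h3, pow_add, Module.End.mul_apply, hx0, map_zero]
  exact fun j₀ h0 => key (b - 1 - (j₀ : ℕ)) j₀ le_rfl h0

/-- For a hook-type nilpotent `N` on an `n`-dimensional complex vector space and
integers `i_1 < ⋯ < i_(b-1)` with `j ≤ i_j ≤ n - b + j` (the possible top rows of a
standard hook tableau), there exists a complete flag fixed by `N` with
`im N^(b-j) ⊆ F(i_j) ⊆ ker N^j` for all `1 ≤ j ≤ b - 1`. -/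
theorem exists_flag_in_hook_component {V : Type*} [AddCommGroup V] [Module ℂ V]
    [FiniteDimensional ℂ V] (n b : ℕ) (hn : Module.finrank ℂ V = n)
    (N : V →ₗ[ℂ] V) (hNb : N ^ b = 0) (hNb1 : N ^ (b - 1) ≠ 0)
    (hrank : Module.finrank ℂ (LinearMap.range N) = b - 1)
    (i : ℕ → ℕ)
    (hmono : ∀ j : ℕ, 1 ≤ j → j + 1 ≤ b - 1 → i j < i (j + 1))
    (hbound : ∀ j : ℕ, 1 ≤ j → j ≤ b - 1 → j ≤ i j ∧ i j ≤ n - b + j) :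
    ∃ F : ℕ → Submodule ℂ V,
      (∀ k : ℕ, k ≤ n → Module.finrank ℂ (F k) = k) ∧
      (∀ k : ℕ, k < n → F k ≤ F (k + 1)) ∧
      (∀ k : ℕ, 1 ≤ k → k ≤ n → (F k).map N ≤ F (k - 1)) ∧
      (∀ j : ℕ, 1 ≤ j → j ≤ b - 1 →
        LinearMap.range (N ^ (b - j)) ≤ F (i j) ∧ F (i j) ≤ LinearMap.ker (N ^ j)) := by
  classical
  rcases Nat.eq_zero_or_pos b with rfl | hb
  · exact absurd hNb (by simpa using hNb1)
  obtain ⟨v, hv⟩ : ∃ v, (N ^ (b - 1)) v ≠ 0 := by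
    by_contra h
    push_neg at h
    exact hNb1 (LinearMap.ext fun x => h x)
  -- linear independence of the Jordan chain
  have li_chain : LinearIndependent ℂ (fun t : Fin b => (N ^ (b - 1 - (t : ℕ))) v) := by
    rw [Fintype.linearIndependent_iff]
    intro c hc j
    exact hook_coeff N hNb hv c 0 hc j (map_zero _)
  have hbn : b ≤ n := by
    have h := li_chain.fintype_card_le_finrank
    simpa [hn] using h
  have hker : Module.finrank ℂ (LinearMap.ker N) = n - b + 1 := by
    have h := LinearMap.finrank_range_add_finrank_ker N
    rw [hn, hrank] at h
    omega
  -- the bottom chain vector is in the kernel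
  have hg1mem : (N ^ (b - 1)) v ∈ LinearMap.ker N := by
    rw [LinearMap.mem_ker, ← Module.End.mul_apply, ← pow_succ']
    have h1 : b - 1 + 1 = b := by omega
    rw [h1, hNb, LinearMap.zero_apply]
  -- extend {g1} to a basis of ker N
  have hsingleton : LinearIndepOn ℂ id
      ({(N ^ (b - 1)) v} : Set V) := (linearIndepOn_singleton_iff ℂ).mpr hv
  have hsubset : ({(N ^ (b - 1)) v} : Set V) ⊆ (LinearMap.ker N : Set V) := by
    simpa using hg1mem
  set E : Set V := hsingleton.extend hsubset with hE
  have hE_sub : E ⊆ (LinearMap.ker N : Set V) := hsingleton.extend_subset hsubset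
  have hE_li : LinearIndependent ℂ ((↑) : E → V) := hsingleton.linearIndepOn_extend hsubset
  have hg1E : (N ^ (b - 1)) v ∈ E := hsingleton.subset_extend hsubset rfl
  have hE_span : span ℂ E = LinearMap.ker N := by
    have h := hsingleton.span_extend_eq_span hsubset
    rw [h, Submodule.span_eq]
  have hE_fin : E.Finite := hE_li.setFinite
  haveI : Fintype E := hE_fin.fintype
  have hT_card : E.toFinset.card = n - b + 1 := by
    have h := finrank_span_set_eq_card hE_li
    rw [hE_span, hker] at h
    omega
  set T' : Finset V := E.toFinset.erase ((N ^ (b - 1)) v) with hT'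
  have hT'_card : T'.card = n - b := by
    rw [hT', Finset.card_erase_of_mem (by simpa using hg1E), hT_card]
    omega
  -- the kernel complement family
  set wF : Fin (n - b) → V := fun t => ((T'.equivFin.symm (Fin.cast hT'_card.symm t)) : V)
    with hwF
  have hwF_T' : ∀ t, wF t ∈ T' := fun t => (T'.equivFin.symm _).2
  have hwF_E : ∀ t, wF t ∈ E := fun t => by
    have := Finset.mem_of_mem_erase (hwF_T' t)
    simpa using this
  have hwF_ne : ∀ t, wF t ≠ (N ^ (b - 1)) v := fun t =>
    Finset.ne_of_mem_erase (hwF_T' t)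
  have hwF_inj : Function.Injective wF := by
    intro a c hac
    have h1 := T'.equivFin.symm.injective (Subtype.ext hac)
    exact Fin.cast_injective _ h1
  -- the full vector family
  set u : ℕ → V := fun t =>
    if h : t < b then (N ^ (b - 1 - t)) v
    else if h2 : t - b < n - b then wF ⟨t - b, h2⟩ else 0 with hu
  have hukernel : ∀ t, b ≤ t → N (u t) = 0 := by
    intro t ht
    simp only [hu]
    rw [dif_neg (by omega)]
    by_cases h2 : t - b < n - b
    · rw [dif_pos h2]
      exact LinearMap.mem_ker.mp (hE_sub (hwF_E ⟨t - b, h2⟩))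
    · rw [dif_neg h2, map_zero]
  -- linear independence of the full family
  have li_w : LinearIndependent ℂ wF := by
    have hinj2 : Function.Injective (fun t => (⟨wF t, hwF_E t⟩ : E)) := by
      intro a c h
      apply hwF_inj
      exact congrArg (Subtype.val : E → V) h
    exact hE_li.comp (fun t => (⟨wF t, hwF_E t⟩ : E)) hinj2
  have hdisj : Disjoint (span ℂ (range fun t : Fin b => (N ^ (b - 1 - (t : ℕ))) v))
      (span ℂ (range wF)) := by
    rw [Submodule.disjoint_def]
    intro x hx hxw
    have hwker : span ℂ (range wF) ≤ LinearMap.ker N := by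
      refine span_le.mpr ?_
      rintro y ⟨t, rfl⟩
      exact hE_sub (hwF_E t)
    have hxker : N x = 0 := LinearMap.mem_ker.mp (hwker hxw)
    obtain ⟨c, hc⟩ := (mem_span_range_iff_exists_fun ℂ).mp hx
    have hcoeff : ∀ j : Fin b, 1 ≤ (j : ℕ) → c j = 0 := by
      intro j hj
      refine hook_coeff N hNb hv c x hc j ?_
      have h3 : (j : ℕ) = ((j : ℕ) - 1) + 1 := by omega
      rw [h3, pow_succ, Module.End.mul_apply, hxker, map_zero]
    have hx0 : x = c ⟨0, hb⟩ • (N ^ (b - 1)) v := by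
      rw [← hc, Finset.sum_eq_single (⟨0, hb⟩ : Fin b)]
      · simp
      · intro j _ hne
        have : 1 ≤ (j : ℕ) := by
          have hj0 : (j : ℕ) ≠ 0 := fun h => hne (Fin.ext (by simp [h]))
          omega
        rw [hcoeff j this, zero_smul]
      · intro h; exact absurd (Finset.mem_univ _) h
    by_contra hxne
    have hc0ne : c ⟨0, hb⟩ ≠ 0 := fun h => hxne (by rw [hx0, h, zero_smul])
    have hg1span : (N ^ (b - 1)) v ∈ span ℂ (range wF) := by
      have h4 : (N ^ (b - 1)) v = (c ⟨0, hb⟩)⁻¹ • x := by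
        rw [hx0, smul_smul, inv_mul_cancel₀ hc0ne, one_smul]
      rw [h4]
      exact smul_mem _ _ hxw
    have hsub2 : range wF ⊆ ((↑) '' {z : E | (z : V) ≠ (N ^ (b - 1)) v}) := by
      rintro y ⟨t, rfl⟩
      exact ⟨⟨wF t, hwF_E t⟩, hwF_ne t, rfl⟩
    have hnm := hE_li.notMem_span_image
      (s := {z : E | (z : V) ≠ (N ^ (b - 1)) v}) (x := ⟨(N ^ (b - 1)) v, hg1E⟩)
      (by simp)
    exact hnm (span_mono hsub2 hg1span)
  have li_u : LinearIndependent ℂ (fun t : Fin n => u (t : ℕ)) := by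
    have li_sum := li_chain.sum_type li_w hdisj
    set φ : Fin n → Fin b ⊕ Fin (n - b) := fun t =>
      if h : (t : ℕ) < b then Sum.inl ⟨t, h⟩
      else Sum.inr ⟨(t : ℕ) - b, by have := t.isLt; omega⟩ with hφ
    have hφinj : Function.Injective φ := by
      intro s t hst
      rw [hφ] at hst
      simp only at hst
      by_cases h1 : (s : ℕ) < b <;> by_cases h2 : (t : ℕ) < b
      · rw [dif_pos h1, dif_pos h2] at hst
        have := congrArg (fun x => Sum.elim (fun y : Fin b => (y : ℕ))
          (fun y : Fin (n - b) => (y : ℕ) + b) x) hst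
        simp at this
        exact Fin.ext this
      · rw [dif_pos h1, dif_neg h2] at hst
        exact absurd hst (by simp)
      · rw [dif_neg h1, dif_pos h2] at hst
        exact absurd hst (by simp)
      · rw [dif_neg h1, dif_neg h2] at hst
        have := congrArg (fun x => Sum.elim (fun y : Fin b => (y : ℕ))
          (fun y : Fin (n - b) => (y : ℕ) + b) x) hst
        simp at this
        exact Fin.ext (by omega)
    have hcomp : (fun t : Fin n => u (t : ℕ))
        = (Sum.elim (fun t : Fin b => (N ^ (b - 1 - (t : ℕ))) v) wF) ∘ φ := by
      funext t
      rw [hu, hφ]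
      simp only [Function.comp_apply]
      by_cases h : (t : ℕ) < b
      · rw [dif_pos h, dif_pos h]
        rfl
      · rw [dif_neg h, dif_neg h, dif_pos (show (t : ℕ) - b < n - b by have := t.isLt; omega)]
        rfl
    rw [hcomp]
    exact li_sum.comp φ hφinj
  have hn0 : 0 < n := lt_of_lt_of_le hb hbn
  haveI : Nonempty (Fin n) := ⟨⟨0, hn0⟩⟩
  have hutop : span ℂ (range fun t : Fin n => u (t : ℕ)) = ⊤ :=
    li_u.span_eq_top_of_card_eq_finrank (by simp [hn])
  -- the extended index sequence
  set I : ℕ → ℕ := fun j => if j = b then n else i j with hI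
  have hIlow : ∀ j, 1 ≤ j → j ≤ b → j ≤ I j := by
    intro j h1 h2
    simp only [hI]
    by_cases h : j = b
    · rw [if_pos h]; omega
    · rw [if_neg h]; exact (hbound j h1 (by omega)).1
  have hIhigh : ∀ j, 1 ≤ j → j ≤ b → I j ≤ n - b + j := by
    intro j h1 h2
    simp only [hI]
    by_cases h : j = b
    · rw [if_pos h]; omega
    · rw [if_neg h]; exact (hbound j h1 (by omega)).2
  have hIsucc : ∀ j, 1 ≤ j → j + 1 ≤ b → I j < I (j + 1) := by
    intro j h1 h2
    simp only [hI]
    by_cases h : j + 1 = b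
    · rw [if_pos h, if_neg (by omega)]
      have := (hbound j h1 (by omega)).2
      omega
    · rw [if_neg (by omega), if_neg h]
      exact hmono j h1 (by omega)
  have hImono : ∀ j' j, 1 ≤ j → j < j' → j' ≤ b → I j < I j' := by
    intro j'
    induction j' with
    | zero => intro j _ h _; omega
    | succ k ih =>
      intro j h1 hlt hle
      rcases Nat.lt_succ_iff_lt_or_eq.mp hlt with h | h
      · exact (ih j h1 h (by omega)).trans (hIsucc k (by omega) hle)
      · subst h; exact hIsucc j h1 hle
  -- the counting function
  set cnt : ℕ → ℕ := fun k => ((Finset.Icc 1 b).filter fun j => I j ≤ k).card with hcnt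
  have hcnt_le_b : ∀ k, cnt k ≤ b := by
    intro k
    simp only [hcnt]
    refine le_trans (Finset.card_filter_le _ _) ?_
    rw [Nat.card_Icc]; omega
  have hcnt_mono : ∀ k k', k ≤ k' → cnt k ≤ cnt k' := by
    intro k k' h
    simp only [hcnt]
    refine Finset.card_le_card ?_
    intro x hx
    rw [Finset.mem_filter] at hx ⊢
    exact ⟨hx.1, hx.2.trans h⟩
  have hcnt_dicho : ∀ m, cnt (m + 1) = cnt m ∨ cnt (m + 1) = cnt m + 1 := by
    intro m
    have h1 : cnt m ≤ cnt (m + 1) := hcnt_mono _ _ (by omega)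
    have h2 : cnt (m + 1) ≤ cnt m + 1 := by
      simp only [hcnt]
      refine le_trans (Finset.card_le_card_sdiff_add_card
        (t := (Finset.Icc 1 b).filter fun j => I j ≤ m)) ?_
      have hsd : (((Finset.Icc 1 b).filter fun j => I j ≤ m + 1) \
          ((Finset.Icc 1 b).filter fun j => I j ≤ m)).card ≤ 1 := by
        rw [Finset.card_le_one]
        intro a ha c hc
        rw [Finset.mem_sdiff, Finset.mem_filter, Finset.mem_Icc] at ha hc
        have ha2 : ¬ I a ≤ m := fun h =>
          ha.2 (Finset.mem_filter.mpr ⟨Finset.mem_Icc.mpr ha.1.1, h⟩)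
        have hc2 : ¬ I c ≤ m := fun h =>
          hc.2 (Finset.mem_filter.mpr ⟨Finset.mem_Icc.mpr hc.1.1, h⟩)
        have haI : I a = m + 1 := by have := ha.1.2; omega
        have hcI : I c = m + 1 := by have := hc.1.2; omega
        rcases lt_trichotomy a c with h | h | h
        · exact absurd (hImono c a ha.1.1.1 h hc.1.1.2) (by omega)
        · exact h
        · exact absurd (hImono a c hc.1.1.1 h ha.1.1.2) (by omega)
      omega
    omega
  have hcnt_ge : ∀ k, k ≤ n → k ≤ cnt k + (n - b) := by
    intro k hk
    have hsub : Finset.Icc 1 (k - (n - b)) ⊆ (Finset.Icc 1 b).filter fun j => I j ≤ k := by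
      intro j hj
      rw [Finset.mem_Icc] at hj
      rw [Finset.mem_filter, Finset.mem_Icc]
      obtain ⟨hja, hjc⟩ := hj
      have hjb : j ≤ b := by omega
      have h6 : n - b + j ≤ k := by omega
      exact ⟨⟨hja, hjb⟩, le_trans (hIhigh j hja hjb) h6⟩
    have h := Finset.card_le_card hsub
    rw [Nat.card_Icc] at h
    simp only [hcnt]
    omega
  have hcnt_le : ∀ k, cnt k ≤ k := by
    intro k
    have hsub : ((Finset.Icc 1 b).filter fun j => I j ≤ k) ⊆ Finset.Icc 1 k := by
      intro j hj
      rw [Finset.mem_filter, Finset.mem_Icc] at hj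
      rw [Finset.mem_Icc]
      exact ⟨hj.1.1, le_trans (hIlow j hj.1.1 hj.1.2) hj.2⟩
    have h := Finset.card_le_card hsub
    rw [Nat.card_Icc] at h
    simp only [hcnt]
    omega
  have hcntI : ∀ j, 1 ≤ j → j ≤ b → cnt (I j) = j := by
    intro j h1 h2
    simp only [hcnt]
    have heq : ((Finset.Icc 1 b).filter fun j' => I j' ≤ I j) = Finset.Icc 1 j := by
      ext j'
      rw [Finset.mem_filter, Finset.mem_Icc, Finset.mem_Icc]
      constructor
      · rintro ⟨⟨ha, hbb⟩, hle⟩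
        refine ⟨ha, ?_⟩
        by_contra hgt
        push_neg at hgt
        exact absurd hle (not_le.mpr (hImono j' j h1 hgt hbb))
      · rintro ⟨ha, hle'⟩
        refine ⟨⟨ha, by omega⟩, ?_⟩
        rcases eq_or_lt_of_le hle' with rfl | h
        · exact le_rfl
        · exact (hImono j j' ha h h2).le
    rw [heq, Nat.card_Icc]
    omega
  have hcntI_pred : ∀ j, 1 ≤ j → j ≤ b → cnt (I j - 1) = j - 1 := by
    intro j h1 h2
    have hIj1 : 1 ≤ I j := le_trans h1 (hIlow j h1 h2)
    simp only [hcnt]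
    have heq : ((Finset.Icc 1 b).filter fun j' => I j' ≤ I j - 1) = Finset.Icc 1 (j - 1) := by
      ext j'
      rw [Finset.mem_filter, Finset.mem_Icc, Finset.mem_Icc]
      constructor
      · rintro ⟨⟨ha, hbb⟩, hle⟩
        refine ⟨ha, ?_⟩
        by_contra hgt
        push_neg at hgt
        have hge : j ≤ j' := by omega
        have : I j ≤ I j' := by
          rcases eq_or_lt_of_le hge with rfl | h
          · exact le_rfl
          · exact (hImono j' j h1 h hbb).le
        omega
      · rintro ⟨ha, hle'⟩
        have hlt : j' < j := by omega
        have h3 : I j' < I j := hImono j j' ha hlt h2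
        exact ⟨⟨ha, by omega⟩, by omega⟩
    rw [heq, Nat.card_Icc]
    omega
  have hstep_at : ∀ j, 1 ≤ j → j ≤ b → cnt (I j) = cnt (I j - 1) + 1 := by
    intro j h1 h2
    rw [hcntI j h1 h2, hcntI_pred j h1 h2]
    omega
  have hstepI : ∀ m, cnt (m + 1) = cnt m + 1 →
      I (cnt (m + 1)) = m + 1 ∧ 1 ≤ cnt (m + 1) ∧ cnt (m + 1) ≤ b := by
    intro m hm
    have hne : ¬ ((Finset.Icc 1 b).filter fun j => I j ≤ m + 1) ⊆
        ((Finset.Icc 1 b).filter fun j => I j ≤ m) := by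
      intro hsub
      have h := Finset.card_le_card hsub
      simp only [hcnt] at hm
      omega
    obtain ⟨j, hj1, hj2⟩ := Finset.not_subset.mp hne
    rw [Finset.mem_filter, Finset.mem_Icc] at hj1
    have hj2' : ¬ I j ≤ m := fun h =>
      hj2 (Finset.mem_filter.mpr ⟨Finset.mem_Icc.mpr hj1.1, h⟩)
    have hIj : I j = m + 1 := by have := hj1.2; omega
    have hcj : cnt (m + 1) = j := by
      rw [← hIj]
      exact hcntI j hj1.1.1 hj1.1.2
    refine ⟨by rw [hcj, hIj], by omega, by omega⟩
  have hcnt_lip : ∀ s t, s ≤ t → cnt t ≤ cnt s + (t - s) := by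
    intro s t
    induction t with
    | zero =>
      intro h
      have : s = 0 := by omega
      subst this
      simp
    | succ k ih =>
      intro h
      rcases Nat.lt_succ_iff_lt_or_eq.mp (Nat.lt_succ_of_le h) with h2 | h2
      · have h3 := ih (by omega)
        have h4 := hcnt_dicho k
        omega
      · subst h2; omega
  -- the ordering map and the flag
  set ψ : ℕ → ℕ := fun m =>
    if cnt (m + 1) = cnt m + 1 then cnt (m + 1) - 1 else b + (m - cnt (m + 1)) with hψ
  set e : ℕ → V := fun m => u (ψ m) with he
  have hψlt : ∀ m, m < n → ψ m < n := by
    intro m hm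
    simp only [hψ]
    by_cases h : cnt (m + 1) = cnt m + 1
    · rw [if_pos h]
      have := hcnt_le_b (m + 1)
      omega
    · rw [if_neg h]
      have h1 := hcnt_ge (m + 1) (by omega)
      have h2 := (hcnt_dicho m).resolve_right h
      have h3 := hcnt_le m
      omega
  have hψinj : ∀ m m', m < n → m' < n → ψ m = ψ m' → m = m' := by
    have hkey : ∀ m m', m < m' → m' < n → ψ m ≠ ψ m' := by
      intro m m' hlt hm'
      simp only [hψ]
      by_cases h1 : cnt (m + 1) = cnt m + 1 <;> by_cases h2 : cnt (m' + 1) = cnt m' + 1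
      · rw [if_pos h1, if_pos h2]
        have h3 : cnt (m + 1) ≤ cnt m' := hcnt_mono _ _ (by omega)
        omega
      · rw [if_pos h1, if_neg h2]
        have := hcnt_le_b (m + 1)
        omega
      · rw [if_neg h1, if_pos h2]
        have := hcnt_le_b (m' + 1)
        omega
      · rw [if_neg h1, if_neg h2]
        have hA := hcnt_lip (m + 1) m' (by omega)
        have hd1 := (hcnt_dicho m).resolve_right h1
        have hd2 := (hcnt_dicho m').resolve_right h2
        have h5 := hcnt_le m
        have h6 := hcnt_le m'
        omega
    intro m m' hm hm' heq
    rcases lt_trichotomy m m' with h | h | h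
    · exact absurd heq (hkey _ _ h hm')
    · exact h
    · exact absurd heq.symm (hkey _ _ h hm)
  -- unfolding the chain steps
  have he_chain : ∀ m, cnt (m + 1) = cnt m + 1 → e m = (N ^ (b - cnt (m + 1))) v := by
    intro m hch
    have h1 : 1 ≤ cnt (m + 1) := by omega
    have h2 : cnt (m + 1) ≤ b := hcnt_le_b _
    simp only [he, hψ, hu]
    rw [if_pos hch, dif_pos (show cnt (m + 1) - 1 < b by omega)]
    have h3 : b - 1 - (cnt (m + 1) - 1) = b - cnt (m + 1) := by omega
    rw [h3]
  have he_at_I : ∀ s, 1 ≤ s → s ≤ b → e (I s - 1) = (N ^ (b - s)) v := by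
    intro s h1 h2
    have hI1 : I s - 1 + 1 = I s := by
      have := hIlow s h1 h2
      omega
    have hch : cnt (I s - 1 + 1) = cnt (I s - 1) + 1 := by
      rw [hI1]
      exact hstep_at s h1 h2
    rw [he_chain _ hch, hI1, hcntI s h1 h2]
  -- the flag
  refine ⟨fun k => span ℂ (range fun m : Fin k => e (m : ℕ)), ?_, ?_, ?_, ?_⟩
  · -- dimensions
    intro k hk
    have hli : LinearIndependent ℂ (fun m : Fin k => e (m : ℕ)) := by
      have hinj : Function.Injective
          (fun m : Fin k => (⟨ψ (m : ℕ), hψlt (m : ℕ) (lt_of_lt_of_le m.isLt hk)⟩ : Fin n)) := by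
        intro a c hac
        have h1 : ψ (a : ℕ) = ψ (c : ℕ) := congrArg Fin.val hac
        exact Fin.ext (hψinj _ _ (lt_of_lt_of_le a.isLt hk) (lt_of_lt_of_le c.isLt hk) h1)
      exact li_u.comp
        (fun m : Fin k => (⟨ψ (m : ℕ), hψlt (m : ℕ) (lt_of_lt_of_le m.isLt hk)⟩ : Fin n)) hinj
    rw [finrank_span_eq_card hli, Fintype.card_fin]
  · -- monotone
    intro k hk
    refine span_mono ?_
    rintro y ⟨m, rfl⟩
    exact ⟨⟨(m : ℕ), by omega⟩, rfl⟩
  · -- fixed by N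
    intro k hk1 hkn
    rw [Submodule.map_span]
    refine span_le.mpr ?_
    rintro y ⟨y', ⟨m, rfl⟩, rfl⟩
    change N (e (m : ℕ)) ∈ _
    have hmk : (m : ℕ) < k := m.isLt
    by_cases hch : cnt ((m : ℕ) + 1) = cnt (m : ℕ) + 1
    · have hj := hstepI (m : ℕ) hch
      rcases eq_or_lt_of_le hj.2.1 with h1 | h1
      · -- j = 1 : N kills the bottom chain vector
        have hz : N (e (m : ℕ)) = 0 := by
          rw [he_chain _ hch, ← h1]
          exact LinearMap.mem_ker.mp hg1mem
        rw [hz]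
        exact zero_mem _
      · -- j ≥ 2
        have hNe : N (e (m : ℕ)) = e (I (cnt ((m : ℕ) + 1) - 1) - 1) := by
          rw [he_chain _ hch, ← Module.End.mul_apply, ← pow_succ',
            he_at_I (cnt ((m : ℕ) + 1) - 1) (by omega) (by have := hj.2.2; omega)]
          have h3 : b - (cnt ((m : ℕ) + 1) - 1) = b - cnt ((m : ℕ) + 1) + 1 := by
            have := hj.2.2; omega
          rw [h3]
        rw [hNe]
        have hlt2 : I (cnt ((m : ℕ) + 1) - 1) - 1 < k - 1 := by
          have h3 : I (cnt ((m : ℕ) + 1) - 1) < I (cnt ((m : ℕ) + 1)) :=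
            hImono (cnt ((m : ℕ) + 1)) (cnt ((m : ℕ) + 1) - 1) (by omega) (by omega) hj.2.2
          have h4 := hj.1
          have h5 := hIlow (cnt ((m : ℕ) + 1) - 1) (by omega) (by have := hj.2.2; omega)
          omega
        exact subset_span ⟨⟨I (cnt ((m : ℕ) + 1) - 1) - 1, hlt2⟩, rfl⟩
    · have hz : N (e (m : ℕ)) = 0 := by
        simp only [he, hψ]
        rw [if_neg hch]
        exact hukernel _ (by omega)
      rw [hz]
      exact zero_mem _
  · -- the interpolation conditions
    intro j hj1 hj2
    have hjb : j < b := by omega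
    have hIj : I j = i j := by simp only [hI]; exact if_neg (by omega)
    constructor
    · -- range N^(b-j) ≤ F (i j)
      rw [LinearMap.range_eq_map, ← hutop, Submodule.map_span]
      refine span_le.mpr ?_
      rintro y ⟨y', ⟨t, rfl⟩, rfl⟩
      change (N ^ (b - j)) (u (t : ℕ)) ∈ _
      by_cases hlt : (t : ℕ) < b
      · have hut : u (t : ℕ) = (N ^ (b - 1 - (t : ℕ))) v := by
          simp only [hu]; rw [dif_pos hlt]
        by_cases hzero : (t : ℕ) + j + 1 ≤ b
        · have hz : (N ^ (b - j)) (u (t : ℕ)) = 0 := by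
            rw [hut, ← Module.End.mul_apply, ← pow_add]
            have hge : b - j + (b - 1 - (t : ℕ))
                = (b - j + (b - 1 - (t : ℕ)) - b) + b := by omega
            rw [hge, pow_add, hNb]
            simp
          rw [hz]
          exact zero_mem _
        · obtain ⟨s, hs_def⟩ : ∃ s, s = (t : ℕ) + j + 1 - b := ⟨_, rfl⟩
          have hs1 : 1 ≤ s := by omega
          have hsj : s ≤ j := by omega
          have hexp : (N ^ (b - j)) (u (t : ℕ)) = (N ^ (b - s)) v := by
            rw [hut, ← Module.End.mul_apply, ← pow_add]
            have h3 : b - j + (b - 1 - (t : ℕ)) = b - s := by omega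
            rw [h3]
          have hes : e (I s - 1) = (N ^ (b - s)) v := he_at_I s hs1 (hsj.trans hjb.le)
          have hmem : I s - 1 < i j := by
            have h4 : I s ≤ I j := by
              rcases eq_or_lt_of_le hsj with rfl | h
              · exact le_rfl
              · exact (hImono j s hs1 h hjb.le).le
            have h5 := hIlow s hs1 (hsj.trans hjb.le)
            omega
          rw [hexp, ← hes]
          exact subset_span ⟨⟨I s - 1, hmem⟩, rfl⟩
      · have hz : (N ^ (b - j)) (u (t : ℕ)) = 0 := by
          have h3 : b - j = (b - j - 1) + 1 := by omega
          rw [h3, pow_succ, Module.End.mul_apply, hukernel _ (by omega), map_zero]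
        rw [hz]
        exact zero_mem _
    · -- F (i j) ≤ ker N^j
      refine span_le.mpr ?_
      rintro y ⟨m, rfl⟩
      rw [SetLike.mem_coe, LinearMap.mem_ker]
      change (N ^ j) (e (m : ℕ)) = 0
      by_cases hch : cnt ((m : ℕ) + 1) = cnt (m : ℕ) + 1
      · have hcle : cnt ((m : ℕ) + 1) ≤ j := by
          have h3 : cnt ((m : ℕ) + 1) ≤ cnt (i j) := hcnt_mono _ _ (by have := m.isLt; omega)
          have h4 : cnt (i j) = j := by rw [← hIj]; exact hcntI j hj1 (by omega)
          omega
        rw [he_chain _ hch, ← Module.End.mul_apply, ← pow_add]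
        have h5 : j + (b - cnt ((m : ℕ) + 1)) = (j + (b - cnt ((m : ℕ) + 1)) - b) + b := by
          have := hcnt_le_b ((m : ℕ) + 1)
          omega
        rw [h5, pow_add, hNb]
        simp
      · have hz : N (e (m : ℕ)) = 0 := by
          simp only [he, hψ]
          rw [if_neg hch]
          exact hukernel _ (by omega)
        have h4 : (N ^ j) (e (m : ℕ)) = (N ^ ((j - 1) + 1)) (e (m : ℕ)) := by
          have h3 : j = (j - 1) + 1 := by omega
          rw [← h3]
        rw [h4, pow_succ, Module.End.mul_apply, hz, map_zero]
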